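/- arXiv:2009.03485 — 2 statements merged into one kernel-verified Lean document; each statement's English description precedes it below -/
import Mathlib

section
/- Constructively, for any two predicates ρ₁ : α → Prop and ρ₂ : β → Prop: if ∀ x y, ¬¬(¬¬ρ₁ x ∨ ¬¬ρ₂ y), then ¬¬((∀ x, ¬¬ρ₁ x) ∨ (∀ y, ¬¬ρ₂ y)). -/
theorem stmt_8 {α β : Type*} (ρ₁ : α → Prop) (ρ₂ : β → Prop)
    (h : ∀ x y, ¬¬(¬¬ρ₁ x ∨ ¬¬ρ₂ y)) :
    ¬¬((∀ x, ¬¬ρ₁ x) ∨ (∀ y, ¬¬ρ₂ y)) := by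
  intro hn
  apply hn
  left
  intro x hx
  apply hn
  right
  intro y hy
  exact h x y (fun d => d.elim (fun p => p hx) (fun q => q hy))
end

section
/- Constructively: for predicates ρ₁ : α → Prop and ρ₂ : β → Prop, if (i) double negation elimination holds for each ρ₁ x and each ρ₂ y, and (ii) ¬¬((∀ x, ρ₁ x) ∨ (∀ y, ρ₂ y)) implies (∀ x, ρ₁ x) ∨ (∀ y, ρ₂ y), then ((∀ x, ρ₁ x) ∨ (∀ y, ρ₂ y)) is equivalent to ∀ x y, (ρ₁ x ∨ ρ₂ y). -/
theorem stmt_15 {α β : Type*} (ρ₁ : α → Prop) (ρ₂ : β → Prop)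
    (h₁ : ∀ x, ¬¬(ρ₁ x) → ρ₁ x) (h₂ : ∀ y, ¬¬(ρ₂ y) → ρ₂ y)
    (h₃ : ¬¬((∀ x, ρ₁ x) ∨ (∀ y, ρ₂ y)) → (∀ x, ρ₁ x) ∨ (∀ y, ρ₂ y)) :
    ((∀ x, ρ₁ x) ∨ (∀ y, ρ₂ y)) ↔ ∀ x y, (ρ₁ x ∨ ρ₂ y) := by
  constructor
  · rintro (h | h) x y
    · exact Or.inl (h x)
    · exact Or.inr (h y)
  · intro h
    apply h₃
    intro hn
    apply hn
    left
    intro x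
    apply h₁ x
    intro hx
    apply hn
    right
    intro y
    exact (h x y).resolve_left hx
end
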